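/- Let h be a positive, decreasing, integrable function on [0,1], extended by 0 to [1,π], and define A_h(r) = (1−r)·(1/2π)∫_{−π}^{π} P_r(t) h(|t|) dt where P_r is the Poisson kernel. Then (1/2π)∫_0^{1−r} h(t) dt ≤ A_h(r) ≤ ((2+π)/π)∫_0^{1−r} h(t) dt for all 0 ≤ r < 1. -/

import Mathlib

open MeasureTheory Set

/-- `A_h(r) = (1−r)·(1/2π)∫_{−π}^{π} P_r(t) h(|t|) dt`, where
`P_r(t) = (1−r²)/(1−2r cos t + r²)` is the Poisson kernel. -/
noncomputable def Ah (h : ℝ → ℝ) (r : ℝ) : ℝ :=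
  (1 - r) * ((2 * Real.pi)⁻¹ * ∫ t in (-Real.pi)..Real.pi,
    ((1 - r ^ 2) / (1 - 2 * r * Real.cos t + r ^ 2)) * h |t|)

set_option maxHeartbeats 1000000 in
/-- If `h` is positive, decreasing and integrable on `[0,1]`, extended by `0` on `[1,π]`,
then `(1/2π)∫_0^{1−r} h ≤ A_h(r) ≤ ((2+π)/π)∫_0^{1−r} h` for `0 ≤ r < 1`. -/
theorem Ah_bounds (h : ℝ → ℝ)
    (hpos : ∀ t ∈ Set.Ioo (0 : ℝ) 1, 0 < h t)
    (hdec : AntitoneOn h (Set.Icc 0 1))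
    (hint : IntervalIntegrable h volume 0 1)
    (hext : ∀ t : ℝ, 1 ≤ t → h t = 0)
    (r : ℝ) (hr0 : 0 ≤ r) (hr1 : r < 1) :
    ((2 * Real.pi)⁻¹ * ∫ t in (0 : ℝ)..(1 - r), h t) ≤ Ah h r ∧
    Ah h r ≤ ((2 + Real.pi) / Real.pi) * ∫ t in (0 : ℝ)..(1 - r), h t := by
  have hpi : (0 : ℝ) < Real.pi := Real.pi_pos
  have hpi3 : (3 : ℝ) < Real.pi := Real.pi_gt_three
  set a : ℝ := 1 - r with ha_def
  have ha0 : 0 < a := by simp only [ha_def]; linarith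
  have ha1 : a ≤ 1 := by simp only [ha_def]; linarith
  have hapi : a ≤ Real.pi := ha1.trans (by linarith)
  have h1pi : (1 : ℝ) ≤ Real.pi := by linarith
  -- denominator positivity
  have hden : ∀ t : ℝ, 0 < 1 - 2 * r * Real.cos t + r ^ 2 := by
    intro t
    nlinarith [Real.cos_le_one t, sq_nonneg (1 - r),
      mul_nonneg hr0 (sub_nonneg.2 (Real.cos_le_one t))]
  have h1r2 : (0 : ℝ) ≤ 1 - r ^ 2 := by nlinarith
  -- nonnegativity of h on [0, ∞)
  have hnn : ∀ t : ℝ, 0 ≤ t → 0 ≤ h t := by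
    intro t ht
    rcases le_or_gt 1 t with h1 | h1
    · exact (hext t h1).ge
    · have := hdec (mem_Icc.mpr ⟨ht, h1.le⟩) (mem_Icc.mpr ⟨zero_le_one, le_rfl⟩) h1.le
      rw [hext 1 le_rfl] at this; exact this
  have hQnn : ∀ t : ℝ, 0 ≤ (1 - r ^ 2) / (1 - 2 * r * Real.cos t + r ^ 2) :=
    fun t => div_nonneg h1r2 (hden t).le
  -- continuity of the Poisson kernel
  have hQc : Continuous fun t : ℝ => (1 - r ^ 2) / (1 - 2 * r * Real.cos t + r ^ 2) := by
    apply continuous_const.div (by continuity)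
    exact fun t => (hden t).ne'
  -- integrability of h on [0, π]
  have hh1pi : IntervalIntegrable h volume 1 Real.pi := by
    apply (intervalIntegrable_const (c := (0:ℝ))).congr
    intro t ht
    rw [uIoc_of_le h1pi] at ht
    exact (hext t ht.1.le).symm
  have hhpi : IntervalIntegrable h volume 0 Real.pi := hint.trans hh1pi
  have hh0a : IntervalIntegrable h volume 0 a :=
    hint.mono_set (uIcc_subset_uIcc left_mem_uIcc
      (by rw [uIcc_of_le zero_le_one]; exact ⟨ha0.le, ha1⟩))
  -- integrability of Q * h on [0, π] and subintervals
  have hPh : IntervalIntegrable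
      (fun t => (1 - r ^ 2) / (1 - 2 * r * Real.cos t + r ^ 2) * h t) volume 0 Real.pi :=
    hhpi.continuousOn_mul hQc.continuousOn
  have hmem : ∀ x : ℝ, 0 ≤ x → x ≤ Real.pi → x ∈ uIcc (0:ℝ) Real.pi := by
    intro x h1 h2; rw [uIcc_of_le hpi.le]; exact ⟨h1, h2⟩
  have hPh0a : IntervalIntegrable
      (fun t => (1 - r ^ 2) / (1 - 2 * r * Real.cos t + r ^ 2) * h t) volume 0 a :=
    hPh.mono_set (uIcc_subset_uIcc left_mem_uIcc (hmem a ha0.le hapi))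
  have hPha1 : IntervalIntegrable
      (fun t => (1 - r ^ 2) / (1 - 2 * r * Real.cos t + r ^ 2) * h t) volume a 1 :=
    hPh.mono_set (uIcc_subset_uIcc (hmem a ha0.le hapi) (hmem 1 zero_le_one h1pi))
  have hPh1pi : IntervalIntegrable
      (fun t => (1 - r ^ 2) / (1 - 2 * r * Real.cos t + r ^ 2) * h t) volume 1 Real.pi :=
    hPh.mono_set (uIcc_subset_uIcc (hmem 1 zero_le_one h1pi) right_mem_uIcc)
  have hPhapi : IntervalIntegrable
      (fun t => (1 - r ^ 2) / (1 - 2 * r * Real.cos t + r ^ 2) * h t) volume a Real.pi :=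
    hPh.mono_set (uIcc_subset_uIcc (hmem a ha0.le hapi) right_mem_uIcc)
  -- the integrand with |t| agrees with the one without on [0, π]
  have habs : EqOn (fun t => (1 - r ^ 2) / (1 - 2 * r * Real.cos t + r ^ 2) * h |t|)
      (fun t => (1 - r ^ 2) / (1 - 2 * r * Real.cos t + r ^ 2) * h t) (uIcc (0:ℝ) Real.pi) := by
    intro t ht
    rw [uIcc_of_le hpi.le] at ht
    simp [abs_of_nonneg ht.1]
  have hInt0pi : IntervalIntegrable
      (fun t => (1 - r ^ 2) / (1 - 2 * r * Real.cos t + r ^ 2) * h |t|) volume 0 Real.pi := by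
    apply hPh.congr
    intro t ht
    rw [uIoc_of_le hpi.le] at ht
    simp [abs_of_nonneg ht.1.le]
  -- evenness of the integrand
  have hfneg : (fun x : ℝ => (1 - r ^ 2) / (1 - 2 * r * Real.cos (-x) + r ^ 2) * h |(-x)|)
      = fun t : ℝ => (1 - r ^ 2) / (1 - 2 * r * Real.cos t + r ^ 2) * h |t| := by
    funext x; rw [Real.cos_neg, abs_neg]
  have hIntneg : IntervalIntegrable
      (fun t => (1 - r ^ 2) / (1 - 2 * r * Real.cos t + r ^ 2) * h |t|) volume (-Real.pi) 0 := by
    have h1 := (IntervalIntegrable.iff_comp_neg enorm_ne_top).mp hInt0pi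
    rw [hfneg] at h1
    simpa using h1.symm
  have heven : (∫ t in (-Real.pi)..Real.pi,
        (1 - r ^ 2) / (1 - 2 * r * Real.cos t + r ^ 2) * h |t|)
      = 2 * ∫ t in (0:ℝ)..Real.pi,
        (1 - r ^ 2) / (1 - 2 * r * Real.cos t + r ^ 2) * h t := by
    have hsplit := intervalIntegral.integral_add_adjacent_intervals hIntneg hInt0pi
    have hneg : (∫ t in (-Real.pi)..(0:ℝ),
          (1 - r ^ 2) / (1 - 2 * r * Real.cos t + r ^ 2) * h |t|)
        = ∫ t in (0:ℝ)..Real.pi,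
          (1 - r ^ 2) / (1 - 2 * r * Real.cos t + r ^ 2) * h |t| := by
      have := intervalIntegral.integral_comp_neg (a := (0:ℝ)) (b := Real.pi)
        (fun t => (1 - r ^ 2) / (1 - 2 * r * Real.cos t + r ^ 2) * h |t|)
      rw [hfneg] at this
      rw [neg_zero] at this
      exact this.symm
    have habs' : (∫ t in (0:ℝ)..Real.pi,
          (1 - r ^ 2) / (1 - 2 * r * Real.cos t + r ^ 2) * h |t|)
        = ∫ t in (0:ℝ)..Real.pi,
          (1 - r ^ 2) / (1 - 2 * r * Real.cos t + r ^ 2) * h t :=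
      intervalIntegral.integral_congr habs
    rw [← hsplit, hneg, habs']; ring
  -- the piece on [1, π] vanishes
  have hI3 : (∫ t in (1:ℝ)..Real.pi,
      (1 - r ^ 2) / (1 - 2 * r * Real.cos t + r ^ 2) * h t) = 0 := by
    rw [intervalIntegral.integral_congr (g := fun _ => (0:ℝ))
      (fun t ht => by rw [uIcc_of_le h1pi] at ht; simp [hext t ht.1])]
    simp
  -- abbreviations
  set S : ℝ := ∫ t in (0:ℝ)..a, h t with hS_def
  set T : ℝ := ∫ t in (0:ℝ)..Real.pi,
    (1 - r ^ 2) / (1 - 2 * r * Real.cos t + r ^ 2) * h t with hT_def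
  have hS0 : 0 ≤ S := intervalIntegral.integral_nonneg ha0.le (fun t ht => hnn t ht.1)
  -- Ah in terms of T
  have hAh : Ah h r = a / Real.pi * T := by
    rw [Ah, heven, ← ha_def]
    field_simp
  -- T = I1 + I2
  have hTsplit : T = (∫ t in (0:ℝ)..a,
        (1 - r ^ 2) / (1 - 2 * r * Real.cos t + r ^ 2) * h t)
      + ∫ t in a..(1:ℝ), (1 - r ^ 2) / (1 - 2 * r * Real.cos t + r ^ 2) * h t := by
    have h1 := intervalIntegral.integral_add_adjacent_intervals hPha1 hPh1pi
    have h2 := intervalIntegral.integral_add_adjacent_intervals hPh0a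
      (hPha1.trans hPh1pi)
    rw [hT_def, ← h2, ← h1, hI3, add_zero]
  -- Lower bound pointwise: 1/a ≤ Q t on [0, a]
  have hlow : ∀ t ∈ Icc (0:ℝ) a, (1/a) * h t
      ≤ (1 - r ^ 2) / (1 - 2 * r * Real.cos t + r ^ 2) * h t := by
    intro t ht
    have hc := Real.one_sub_sq_div_two_le_cos (x := t)
    have ht2 : t ^ 2 ≤ a ^ 2 := by nlinarith [ht.1, ht.2]
    have hq : (1/a) ≤ (1 - r ^ 2) / (1 - 2 * r * Real.cos t + r ^ 2) := by
      rw [div_le_div_iff₀ ha0 (hden t)]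
      have hr1c : 0 ≤ r * (t^2/2 - (1 - Real.cos t)) :=
        mul_nonneg hr0 (by linarith)
      have hr2c : 0 ≤ r * (a^2 - t^2) := mul_nonneg hr0 (by linarith)
      simp only [ha_def] at *
      nlinarith [hr1c, hr2c]
    exact mul_le_mul_of_nonneg_right hq (hnn t ht.1)
  -- Upper bound pointwise on [0, a] : Q t ≤ 2/a
  have hup1 : ∀ t ∈ Icc (0:ℝ) a,
      (1 - r ^ 2) / (1 - 2 * r * Real.cos t + r ^ 2) * h t ≤ (2/a) * h t := by
    intro t ht
    have hq : (1 - r ^ 2) / (1 - 2 * r * Real.cos t + r ^ 2) ≤ 2/a := by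
      rw [div_le_div_iff₀ (hden t) ha0]
      have h1 := mul_nonneg hr0 (sub_nonneg.2 (Real.cos_le_one t))
      have h2 : (0:ℝ) ≤ (1 - r)^2 * (1 - r) :=
        mul_nonneg (sq_nonneg _) (by linarith)
      rw [ha_def]
      nlinarith [h1, h2, sq_nonneg (1 - r)]
    exact mul_le_mul_of_nonneg_right hq (hnn t ht.1)
  -- I1 bounds
  have hL1 : (1/a) * S ≤ ∫ t in (0:ℝ)..a,
      (1 - r ^ 2) / (1 - 2 * r * Real.cos t + r ^ 2) * h t := by
    rw [hS_def, ← intervalIntegral.integral_const_mul]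
    exact intervalIntegral.integral_mono_on ha0.le (hh0a.const_mul _) hPh0a hlow
  have hU1 : (∫ t in (0:ℝ)..a, (1 - r ^ 2) / (1 - 2 * r * Real.cos t + r ^ 2) * h t)
      ≤ (2/a) * S := by
    rw [hS_def, ← intervalIntegral.integral_const_mul]
    exact intervalIntegral.integral_mono_on ha0.le hPh0a (hh0a.const_mul _) hup1
  -- a * h a ≤ S
  have hahS : a * h a ≤ S := by
    have := intervalIntegral.integral_mono_on (f := fun _ => h a) (g := h)
      ha0.le intervalIntegrable_const hh0a
      (fun t ht => hdec (mem_Icc.mpr ⟨ht.1, ht.2.trans ha1⟩)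
        (mem_Icc.mpr ⟨ha0.le, ha1⟩) ht.2)
    simpa [mul_comm] using this
  -- I2 bound:  ∫_a^1 Qh ≤ (256/225) * (1+r) * h a
  have hU2 : (∫ t in a..(1:ℝ), (1 - r ^ 2) / (1 - 2 * r * Real.cos t + r ^ 2) * h t)
      ≤ (256/225) * (1 + r) * h a := by
    rcases hr0.eq_or_lt with hr | hr
    · -- r = 0 : the interval [a,1] is degenerate
      have ha' : a = 1 := by rw [ha_def, ← hr, sub_zero]
      rw [ha']
      simp only [intervalIntegral.integral_same]
      exact mul_nonneg (by nlinarith) (hnn 1 zero_le_one)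
    · -- r > 0
      have hrne : r ≠ 0 := hr.ne'
      have hKint : IntervalIntegrable
          (fun t : ℝ => (256 * (1 - r ^ 2) / (225 * r) * h a) * (t ^ 2)⁻¹) volume a 1 := by
        apply ContinuousOn.intervalIntegrable
        apply ContinuousOn.mul continuousOn_const
        apply ContinuousOn.inv₀ (by fun_prop)
        intro t ht
        rw [uIcc_of_le ha1] at ht
        have : 0 < t := lt_of_lt_of_le ha0 ht.1
        positivity
      have hpt : ∀ t ∈ Icc a 1,
          (1 - r ^ 2) / (1 - 2 * r * Real.cos t + r ^ 2) * h t
          ≤ (256 * (1 - r ^ 2) / (225 * r) * h a) * (t ^ 2)⁻¹ := by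
        intro t ht
        have ht0 : 0 < t := lt_of_lt_of_le ha0 ht.1
        have ht1 : t ≤ 1 := ht.2
        -- 1 - cos t ≥ (225/512) t²
        have hs : (15/32) * t ≤ Real.sin (t/2) := by
          have h1 := Real.sin_gt_sub_cube (x := t/2) (by linarith)
          nlinarith [ht0.le, ht1, sq_nonneg t, pow_le_pow_left₀ ht0.le ht1 3]
        have hs0 : (0:ℝ) ≤ (15/32) * t := by positivity
        have hsin2 : ((15/32) * t) ^ 2 ≤ Real.sin (t/2) ^ 2 := by
          nlinarith [hs, hs0]
        have hcos : Real.cos t = 1 - 2 * Real.sin (t/2) ^ 2 := by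
          have h1 := Real.cos_two_mul (t/2)
          have h2 := Real.sin_sq_add_cos_sq (t/2)
          rw [show 2 * (t/2) = t by ring] at h1
          linarith
        have honecos : (225/512) * t ^ 2 ≤ 1 - Real.cos t := by
          rw [hcos]; nlinarith [hsin2]
        -- denominator lower bound
        have hd2 : (225/256) * (r * t ^ 2) ≤ 1 - 2 * r * Real.cos t + r ^ 2 := by
          nlinarith [mul_le_mul_of_nonneg_left honecos hr.le, sq_nonneg (1 - r)]
        have hd2pos : (0:ℝ) < (225/256) * (r * t ^ 2) := by positivity
        have hq : (1 - r ^ 2) / (1 - 2 * r * Real.cos t + r ^ 2)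
            ≤ (256 * (1 - r ^ 2) / (225 * r)) * (t ^ 2)⁻¹ := by
          have h1 : (1 - r ^ 2) / (1 - 2 * r * Real.cos t + r ^ 2)
              ≤ (1 - r ^ 2) / ((225/256) * (r * t ^ 2)) :=
            div_le_div_of_nonneg_left h1r2 hd2pos hd2
          have h2 : (1 - r ^ 2) / ((225/256) * (r * t ^ 2))
              = (256 * (1 - r ^ 2) / (225 * r)) * (t ^ 2)⁻¹ := by
            field_simp
          rw [← h2]; exact h1
        have hht : h t ≤ h a :=
          hdec (mem_Icc.mpr ⟨ha0.le, ha1⟩)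
            (mem_Icc.mpr ⟨(ha0.trans_le ht.1).le, ht1⟩) ht.1
        have htinv : (0:ℝ) ≤ (t ^ 2)⁻¹ := by positivity
        calc (1 - r ^ 2) / (1 - 2 * r * Real.cos t + r ^ 2) * h t
            ≤ (1 - r ^ 2) / (1 - 2 * r * Real.cos t + r ^ 2) * h a :=
              mul_le_mul_of_nonneg_left hht (hQnn t)
          _ ≤ (256 * (1 - r ^ 2) / (225 * r)) * (t ^ 2)⁻¹ * h a :=
              mul_le_mul_of_nonneg_right hq (hnn a ha0.le)
          _ = (256 * (1 - r ^ 2) / (225 * r) * h a) * (t ^ 2)⁻¹ := by ring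
      have hmono := intervalIntegral.integral_mono_on ha1 hPha1 hKint hpt
      -- compute the bounding integral via FTC
      have hIsq : (∫ t in a..(1:ℝ), (t ^ 2)⁻¹) = a⁻¹ - 1 := by
        have hd : ∀ t ∈ uIcc a (1:ℝ), HasDerivAt (fun u : ℝ => -u⁻¹) ((t ^ 2)⁻¹) t := by
          intro t ht
          rw [uIcc_of_le ha1] at ht
          have ht0 : t ≠ 0 := (lt_of_lt_of_le ha0 ht.1).ne'
          simpa [Pi.neg_def] using (hasDerivAt_inv ht0).neg
        have hi : IntervalIntegrable (fun t : ℝ => (t ^ 2)⁻¹) volume a 1 := by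
          apply ContinuousOn.intervalIntegrable
          apply ContinuousOn.inv₀ (by fun_prop)
          intro t ht
          rw [uIcc_of_le ha1] at ht
          have : 0 < t := lt_of_lt_of_le ha0 ht.1
          positivity
        have := intervalIntegral.integral_eq_sub_of_hasDerivAt hd hi
        rw [this]
        norm_num
        ring
      have hKval : (∫ t in a..(1:ℝ), (256 * (1 - r ^ 2) / (225 * r) * h a) * (t ^ 2)⁻¹)
          = (256/225) * (1 + r) * h a := by
        rw [intervalIntegral.integral_const_mul, hIsq, ha_def]
        have h1r : (1:ℝ) - r ≠ 0 := by intro hc; rw [ha_def] at ha0; linarith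
        field_simp
        ring
      rw [hKval] at hmono
      exact hmono
  -- assemble everything
  constructor
  · -- lower bound
    rw [hAh]
    have hT1 : (1/a) * S ≤ T := by
      have hrest : 0 ≤ ∫ t in a..Real.pi,
          (1 - r ^ 2) / (1 - 2 * r * Real.cos t + r ^ 2) * h t :=
        intervalIntegral.integral_nonneg hapi
          (fun u hu => mul_nonneg (hQnn u) (hnn u (ha0.le.trans hu.1)))
      have hadd := intervalIntegral.integral_add_adjacent_intervals hPh0a hPhapi
      calc (1/a) * S ≤ ∫ t in (0:ℝ)..a,
            (1 - r ^ 2) / (1 - 2 * r * Real.cos t + r ^ 2) * h t := hL1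
        _ ≤ T := by rw [hT_def, ← hadd]; linarith
    calc (2 * Real.pi)⁻¹ * S ≤ Real.pi⁻¹ * S := by
          apply mul_le_mul_of_nonneg_right _ hS0
          rw [inv_le_inv₀ (by positivity) hpi]
          linarith
      _ = a / Real.pi * ((1/a) * S) := by
          field_simp [ha0.ne']
      _ ≤ a / Real.pi * T := by
          apply mul_le_mul_of_nonneg_left hT1 (by positivity)
  · -- upper bound
    rw [hAh]
    have hT2 : a * T ≤ 2 * S + (256/225) * (1 + r) * (a * h a) := by
      have := mul_le_mul_of_nonneg_left (add_le_add hU1 hU2) ha0.le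
      rw [← hTsplit] at this
      calc a * T ≤ a * ((2/a) * S + (256/225) * (1 + r) * h a) := this
        _ = 2 * S + (256/225) * (1 + r) * (a * h a) := by
            field_simp
    have hfinal : a * T ≤ (2 + Real.pi) * S := by
      have haha : 0 ≤ a * h a := mul_nonneg ha0.le (hnn a ha0.le)
      nlinarith [hT2, hahS, hS0, haha, mul_nonneg (sub_nonneg.2 hr1.le) haha,
        mul_nonneg (sub_nonneg.2 hpi3.le) hS0]
    calc a / Real.pi * T = (a * T) / Real.pi := by ring
      _ ≤ ((2 + Real.pi) * S) / Real.pi := by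
          gcongr
      _ = (2 + Real.pi) / Real.pi * S := by ring
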